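/- There exists a constant C ≥ 1 such that for every n ≥ 2 and all real numbers a_{i,j} (1 ≤ i < j ≤ n), C^{−1} · (∑_{1≤i<j≤n} a_{i,j}²)^{1/2} ≤ ‖ ∑_{1≤i<j≤n} a_{i,j} r_i r_j ‖_{L_M} ≤ C · (∑_{1≤i<j≤n} a_{i,j}²)^{1/2}. That is, the Rademacher chaos of order 2 is equivalent, in the exponential Orlicz space L_M with M(t) = e^t − 1, to the canonical basis of ℓ². -/

import Mathlib

open MeasureTheory ENNReal

/-- The Rademacher functions on `[0,1]`: `r k t = (-1)^⌊2^(k-1) t⌋` (for `k ≥ 1`). -/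
noncomputable def rademacher (k : ℕ) (t : ℝ) : ℝ :=
  (-1 : ℝ) ^ ⌊(2 : ℝ) ^ (k - 1) * t⌋

/-- The Orlicz (Luxemburg) norm in the exponential Orlicz space `L_M`,
`M(t) = e^t − 1`:  `‖x‖_{L_M} = inf{ λ > 0 : ∫₀¹ (e^{|x(t)|/λ} − 1) dt ≤ 1 }`. -/
noncomputable def expOrliczNorm (x : ℝ → ℝ) : ℝ :=
  sInf {l : ℝ | 0 < l ∧ ∫ t in Set.Icc (0 : ℝ) 1, (Real.exp (|x t| / l) - 1) ≤ 1}

open Finset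

namespace ChaosAux

lemma binom_ineq (m : ℕ) : ∀ j, j ≤ m → Nat.choose (2*m) (2*j) ≤ Nat.choose m j * (2*m-1)^j := by
  intro j
  induction j with
  | zero => simp
  | succ j ih =>
    intro hj
    have hjm : j < m := hj
    have ihj := ih hjm.le
    have hgoal : 2*(j+1) = 2*j+2 := by ring
    rw [hgoal]
    have f1 : Nat.choose (2*m) (2*j+1) * (2*j+1) = Nat.choose (2*m) (2*j) * (2*m - 2*j) :=
      Nat.choose_succ_right_eq (2*m) (2*j)
    have f2 : Nat.choose (2*m) (2*j+2) * (2*j+2) = Nat.choose (2*m) (2*j+1) * (2*m - (2*j+1)) :=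
      Nat.choose_succ_right_eq (2*m) (2*j+1)
    have f3 : Nat.choose m (j+1) * (j+1) = Nat.choose m j * (m - j) :=
      Nat.choose_succ_right_eq m j
    have key : Nat.choose (2*m) (2*j+2) * ((2*j+2)*(2*j+1))
        ≤ (Nat.choose m (j+1) * (2*m-1)^(j+1)) * ((2*j+2)*(2*j+1)) := by
      have e1 : Nat.choose (2*m) (2*j+2) * ((2*j+2)*(2*j+1))
          = Nat.choose (2*m) (2*j) * ((2*m-2*j)*(2*m-(2*j+1))) := by
        calc Nat.choose (2*m) (2*j+2) * ((2*j+2)*(2*j+1))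
            = (Nat.choose (2*m) (2*j+2) * (2*j+2))*(2*j+1) := by ring
          _ = (Nat.choose (2*m) (2*j+1) * (2*m-(2*j+1)))*(2*j+1) := by rw [f2]
          _ = (Nat.choose (2*m) (2*j+1) * (2*j+1))*(2*m-(2*j+1)) := by ring
          _ = (Nat.choose (2*m) (2*j) * (2*m-2*j))*(2*m-(2*j+1)) := by rw [f1]
          _ = Nat.choose (2*m) (2*j) * ((2*m-2*j)*(2*m-(2*j+1))) := by ring
      rw [e1]
      have e2 : (2*m-2*j) = 2*(m-j) := by omega
      have e3 : 2*m-(2*j+1) ≤ (2*m-1)*(2*j+1) := by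
        have h4 : 2*m-(2*j+1) ≤ 2*m-1 := by omega
        exact h4.trans (Nat.le_mul_of_pos_right _ (by omega))
      rw [e2]
      calc Nat.choose (2*m) (2*j) * ((2*(m-j))*(2*m-(2*j+1)))
          ≤ (Nat.choose m j * (2*m-1)^j) * ((2*(m-j))*((2*m-1)*(2*j+1))) :=
            Nat.mul_le_mul ihj (Nat.mul_le_mul le_rfl e3)
        _ = (Nat.choose m j * (m-j)) * ((2*m-1)^(j+1)) * (2*(2*j+1)) := by ring
        _ = (Nat.choose m (j+1) * (j+1)) * ((2*m-1)^(j+1)) * (2*(2*j+1)) := by rw [f3]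
        _ = (Nat.choose m (j+1) * (2*m-1)^(j+1)) * ((2*j+2)*(2*j+1)) := by ring
    exact Nat.le_of_mul_le_mul_right key (by positivity)

lemma filter_even_range (m : ℕ) :
    (range (2*m+1)).filter (fun k => Even k) = (range (m+1)).image (fun j => 2*j) := by
  ext x
  simp only [mem_filter, mem_range, mem_image]
  constructor
  · rintro ⟨hx, r, rfl⟩
    exact ⟨r, by omega, by omega⟩
  · rintro ⟨j, hj, rfl⟩
    exact ⟨by omega, j, by omega⟩

lemma two_point (m : ℕ) (a b : ℝ) :
    (a+b)^(2*m) + (a-b)^(2*m) ≤ 2 * (a^2 + ((2*m-1 : ℕ) : ℝ) * b^2)^m := by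
  have hL : (a+b)^(2*m) + (a-b)^(2*m)
      = ∑ k ∈ range (2*m+1), (a^k * b^(2*m-k) * (Nat.choose (2*m) k : ℝ)) * (1 + (-1)^(2*m-k)) := by
    rw [add_pow]
    have hab : a - b = a + (-b) := by ring
    rw [hab, add_pow, ← sum_add_distrib]
    apply sum_congr rfl; intro k hk
    have hnb : (-b)^(2*m-k) = (-1)^(2*m-k) * b^(2*m-k) := by rw [neg_pow]
    rw [hnb]; ring
  rw [hL, ← Finset.sum_filter_add_sum_filter_not (range (2*m+1)) (fun k => Even k)]
  have hodd : ∑ k ∈ (range (2*m+1)).filter (fun k => ¬ Even k),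
      (a^k * b^(2*m-k) * (Nat.choose (2*m) k : ℝ)) * (1 + (-1)^(2*m-k)) = 0 := by
    apply sum_eq_zero; intro k hk
    simp only [mem_filter, mem_range] at hk
    have hko : Odd (2*m - k) := by
      rcases Nat.not_even_iff_odd.mp hk.2 with ⟨r, hr⟩
      exact ⟨m - r - 1, by omega⟩
    rw [hko.neg_one_pow]; ring
  rw [hodd, add_zero, filter_even_range, sum_image (by intro x _ y _ h; simp only at h; omega)]
  rw [add_pow, Finset.mul_sum]
  apply sum_le_sum
  intro j hj
  simp only [mem_range] at hj
  have hj' : j ≤ m := by omega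
  have hev : (-1 : ℝ)^(2*m-2*j) = 1 := Even.neg_one_pow ⟨m-j, by omega⟩
  rw [hev]
  have h1 : a^(2*j) = (a^2)^j := pow_mul a 2 j
  have h2 : b^(2*m-2*j) = (b^2)^(m-j) := by rw [← pow_mul]; congr 1; omega
  have hc : (Nat.choose (2*m) (2*j) : ℝ) ≤ (Nat.choose m j : ℝ) * ((2*m-1 : ℕ):ℝ)^(m-j) := by
    have hb := binom_ineq m (m-j) (by omega)
    have hs1 : Nat.choose (2*m) (2*(m-j)) = Nat.choose (2*m) (2*j) := by
      have : 2*(m-j) = 2*m - 2*j := by omega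
      rw [this, Nat.choose_symm (by omega : 2*j ≤ 2*m)]
    have hs2 : Nat.choose m (m-j) = Nat.choose m j := Nat.choose_symm hj'
    rw [hs1, hs2] at hb
    exact_mod_cast hb
  calc a^(2*j) * b^(2*m-2*j) * (Nat.choose (2*m) (2*j):ℝ) * (1+1)
      = 2 * ((a^2)^j * ((b^2)^(m-j) * (Nat.choose (2*m) (2*j):ℝ))) := by rw [h1,h2]; ring
    _ ≤ 2 * ((a^2)^j * ((b^2)^(m-j) * ((Nat.choose m j:ℝ) * ((2*m-1:ℕ):ℝ)^(m-j)))) := by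
        have hbb : (0:ℝ) ≤ (b^2)^(m-j) := by positivity
        have haa : (0:ℝ) ≤ (a^2)^j := by positivity
        gcongr
    _ = 2 * ((a^2)^j * (((2*m-1:ℕ):ℝ)*b^2)^(m-j) * (Nat.choose m j:ℝ)) := by rw [mul_pow]; ring

lemma fact_bound (k : ℕ) : (k:ℝ)^k ≤ Real.exp 1 ^ k * (Nat.factorial k : ℝ) := by
  induction k with
  | zero => simp
  | succ k ih =>
    have hstep : ((k+1:ℕ):ℝ)^k ≤ Real.exp 1 * (k:ℝ)^k := by
      rcases Nat.eq_zero_or_pos k with rfl | hk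
      · simpa using Real.one_le_exp (by norm_num)
      · have h1 : ((k+1:ℕ):ℝ) ≤ Real.exp (1/(k:ℝ)) * (k:ℝ) := by
          have := Real.add_one_le_exp (1/(k:ℝ))
          have hk0 : (0:ℝ) < (k:ℝ) := by exact_mod_cast hk
          have h2 : (1/(k:ℝ) + 1) * k ≤ Real.exp (1/(k:ℝ)) * k := by
            apply mul_le_mul_of_nonneg_right this hk0.le
          have h3 : (1/(k:ℝ) + 1) * k = (k:ℝ) + 1 := by field_simp; ring
          push_cast
          linarith [h2, h3]
        have hk0 : (0:ℝ) < (k:ℝ) := by exact_mod_cast hk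
        calc ((k+1:ℕ):ℝ)^k ≤ (Real.exp (1/(k:ℝ)) * (k:ℝ))^k := by
              apply pow_le_pow_left₀ (by positivity) h1 k
          _ = Real.exp (1/(k:ℝ))^k * (k:ℝ)^k := mul_pow _ _ _
          _ = Real.exp 1 * (k:ℝ)^k := by
              rw [← Real.exp_nat_mul]
              congr 1
              field_simp
    have hfact : (Nat.factorial (k+1) : ℝ) = ((k:ℝ)+1) * (Nat.factorial k : ℝ) := by
      rw [Nat.factorial_succ]; push_cast; ring
    have hstep' : ((k:ℝ)+1)^k ≤ Real.exp 1 * (k:ℝ)^k := by push_cast at hstep; exact hstep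
    have hexp := Real.exp_pos 1
    push_cast
    calc ((k:ℝ)+1)^(k+1) = ((k:ℝ)+1) * ((k:ℝ)+1)^k := by ring
      _ ≤ ((k:ℝ)+1) * (Real.exp 1 * (k:ℝ)^k) := by
          apply mul_le_mul_of_nonneg_left hstep' (by positivity)
      _ ≤ ((k:ℝ)+1) * (Real.exp 1 * (Real.exp 1 ^ k * (Nat.factorial k : ℝ))) := by
          apply mul_le_mul_of_nonneg_left _ (by positivity)
          apply mul_le_mul_of_nonneg_left ih (by positivity)
      _ = Real.exp 1 ^ (k+1) * (((k:ℝ)+1) * (Nat.factorial k : ℝ)) := by ring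
      _ = Real.exp 1 ^ (k+1) * (Nat.factorial (k+1) : ℝ) := by rw [hfact]

lemma exp_one_sq_le : Real.exp 1 ^ 2 ≤ 16 := by
  have h := Real.exp_one_lt_d9
  nlinarith [Real.exp_pos 1]




noncomputable def walsh (c : Finset ℕ → ℝ) (N : ℕ) (T : Finset ℕ) : ℝ :=
  ∑ S ∈ (range N).powerset, c S * (-1 : ℝ) ^ (S ∩ T).card

lemma powerset_succ_sum (N : ℕ) (G : Finset ℕ → ℝ) :
    ∑ T ∈ (range (N+1)).powerset, G T
      = ∑ T ∈ (range N).powerset, G T + ∑ T ∈ (range N).powerset, G (insert N T) := by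
  rw [range_add_one, powerset_insert, sum_union, sum_image]
  · intro x hx y hy h
    simp only [Finset.mem_coe, mem_powerset] at hx hy
    have hxN : N ∉ x := fun hc => (by simpa using hx hc : N < N).false
    have hyN : N ∉ y := fun hc => (by simpa using hy hc : N < N).false
    have := congrArg (fun s => Finset.erase s N) h
    simpa [Finset.erase_insert hxN, Finset.erase_insert hyN] using this
  · rw [Finset.disjoint_left]
    intro T hT hT'
    simp only [mem_powerset] at hT
    simp only [mem_image, mem_powerset] at hT'
    obtain ⟨x, hx, rfl⟩ := hT'
    exact (by simpa using hT (mem_insert_self N x) : N < N).false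

lemma orth (N : ℕ) : ∀ U ∈ (range N).powerset,
    ∑ T ∈ (range N).powerset, (-1:ℝ) ^ (U ∩ T).card = if U = ∅ then (2^N : ℝ) else 0 := by
  induction N with
  | zero =>
    intro U hU
    simp only [range_zero, powerset_empty, mem_singleton] at hU
    subst hU
    simp
  | succ N ih =>
    intro U hU
    simp only [mem_powerset] at hU
    rw [powerset_succ_sum N (fun T => (-1:ℝ) ^ (U ∩ T).card)]
    by_cases hNU : N ∈ U
    · have hU0 : U ≠ ∅ := fun h => by simp [h] at hNU
      rw [if_neg hU0]
      have hsec : ∀ T ∈ (range N).powerset,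
          (-1:ℝ) ^ (U ∩ insert N T).card = -((-1:ℝ) ^ (U ∩ T).card) := by
        intro T hT
        simp only [mem_powerset] at hT
        have hNT : N ∉ T := fun hc => (by simpa using hT hc : N < N).false
        have he : U ∩ insert N T = insert N (U ∩ T) := by
          ext x
          simp only [mem_inter, mem_insert]
          constructor
          · rintro ⟨h1, h2|h2⟩
            · exact Or.inl h2
            · exact Or.inr ⟨h1, h2⟩
          · rintro (rfl|⟨h1,h2⟩)
            · exact ⟨hNU, Or.inl rfl⟩
            · exact ⟨h1, Or.inr h2⟩
        rw [he, Finset.card_insert_of_notMem (fun hc => hNT (mem_of_mem_inter_right hc))]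
        rw [pow_succ]; ring
      rw [sum_congr rfl hsec, sum_neg_distrib]
      ring
    · have hU' : U ⊆ range N := by
        intro x hx
        rcases mem_insert.mp (by rw [← range_add_one]; exact hU hx) with rfl | h
        · exact absurd hx hNU
        · exact h
      have hsec : ∀ T ∈ (range N).powerset,
          (-1:ℝ) ^ (U ∩ insert N T).card = (-1:ℝ) ^ (U ∩ T).card := by
        intro T hT
        congr 2
        ext x
        simp only [mem_inter, mem_insert]
        constructor
        · rintro ⟨h1, rfl|h2⟩
          · exact absurd h1 hNU
          · exact ⟨h1, h2⟩
        · rintro ⟨h1, h2⟩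
          exact ⟨h1, Or.inr h2⟩
      rw [sum_congr rfl hsec, ih U (mem_powerset.mpr hU')]
      by_cases hU0 : U = ∅ <;> simp [hU0] <;> ring

lemma card_symmDiff_parity (A B : Finset ℕ) :
    A.card + B.card = (symmDiff A B).card + 2 * (A ∩ B).card := by
  have h1 : (symmDiff A B).card = (A \ B).card + (B \ A).card := by
    rw [symmDiff_def, Finset.sup_eq_union]
    exact Finset.card_union_of_disjoint (disjoint_sdiff_sdiff)
  have h2 := Finset.card_sdiff_add_card_inter A B
  have h3 := Finset.card_sdiff_add_card_inter B A
  rw [Finset.inter_comm B A] at h3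
  omega

lemma chi_mul (S S' T : Finset ℕ) :
    (-1:ℝ)^(S∩T).card * (-1:ℝ)^(S'∩T).card = (-1:ℝ)^((symmDiff S S')∩T).card := by
  rw [← pow_add]
  have h1 : symmDiff S S' ∩ T = symmDiff (S∩T) (S'∩T) := inf_symmDiff_distrib_right S S' T
  rw [h1]
  have h2 := card_symmDiff_parity (S∩T) (S'∩T)
  rw [h2, pow_add, pow_mul, neg_one_sq, one_pow, mul_one]

lemma chi_orth (N : ℕ) {S S' : Finset ℕ} (hS : S ∈ (range N).powerset)
    (hS' : S' ∈ (range N).powerset) :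
    ∑ T ∈ (range N).powerset, (-1:ℝ)^(S∩T).card * (-1:ℝ)^(S'∩T).card
      = if S = S' then (2^N : ℝ) else 0 := by
  simp only [chi_mul]
  have hmem : symmDiff S S' ∈ (range N).powerset := by
    simp only [mem_powerset] at *
    intro x hx
    rw [Finset.mem_symmDiff] at hx
    rcases hx with ⟨h, _⟩ | ⟨h, _⟩
    · exact hS h
    · exact hS' h
  rw [orth N (symmDiff S S') hmem]
  by_cases h : S = S'
  · rw [if_pos h, if_pos (by rw [h, ← Finset.bot_eq_empty]; exact symmDiff_self S')]
  · rw [if_neg h, if_neg (fun hc => h (symmDiff_eq_bot.mp (by rw [Finset.bot_eq_empty]; exact hc)))]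

lemma parseval (N : ℕ) (c : Finset ℕ → ℝ) :
    ∑ T ∈ (range N).powerset, (walsh c N T)^2 = 2^N * ∑ S ∈ (range N).powerset, c S ^ 2 := by
  have step1 : ∀ T, (walsh c N T)^2 = ∑ S ∈ (range N).powerset, ∑ S' ∈ (range N).powerset,
      (c S * c S') * ((-1:ℝ)^(S∩T).card * (-1:ℝ)^(S'∩T).card) := by
    intro T
    rw [sq, walsh, Finset.sum_mul_sum]
    apply sum_congr rfl; intro S _
    apply sum_congr rfl; intro S' _
    ring
  simp only [step1]
  rw [Finset.sum_comm]
  have step2 : ∀ S ∈ (range N).powerset,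
      ∑ T ∈ (range N).powerset, ∑ S' ∈ (range N).powerset,
        (c S * c S') * ((-1:ℝ)^(S∩T).card * (-1:ℝ)^(S'∩T).card)
      = c S ^ 2 * 2^N := by
    intro S hS
    rw [Finset.sum_comm]
    have inner : ∀ S' ∈ (range N).powerset,
        ∑ T ∈ (range N).powerset, (c S * c S') * ((-1:ℝ)^(S∩T).card * (-1:ℝ)^(S'∩T).card)
        = if S = S' then c S ^2 * 2^N else 0 := by
      intro S' hS'
      rw [← Finset.mul_sum, chi_orth N hS hS']
      by_cases h : S = S' <;> simp [h] <;> ring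
    rw [sum_congr rfl inner, Finset.sum_ite_eq]
    simp [hS]
  rw [sum_congr rfl step2, ← Finset.sum_mul]
  ring

lemma walsh_succ_not (N : ℕ) (c : Finset ℕ → ℝ) (T : Finset ℕ) (hT : T ∈ (range N).powerset) :
    walsh c (N+1) T = walsh c N T + walsh (fun S => c (insert N S)) N T := by
  simp only [mem_powerset] at hT
  have hNT : N ∉ T := fun hc => (by simpa using hT hc : N < N).false
  rw [walsh, powerset_succ_sum N (fun S => c S * (-1:ℝ)^(S ∩ T).card), walsh, walsh]
  congr 1
  apply sum_congr rfl; intro S hS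
  rw [Finset.insert_inter_of_notMem hNT]

lemma walsh_succ_mem (N : ℕ) (c : Finset ℕ → ℝ) (T : Finset ℕ) (hT : T ∈ (range N).powerset) :
    walsh c (N+1) (insert N T) = walsh c N T - walsh (fun S => c (insert N S)) N T := by
  simp only [mem_powerset] at hT
  have hNT : N ∉ T := fun hc => (by simpa using hT hc : N < N).false
  rw [walsh, powerset_succ_sum N (fun S => c S * (-1:ℝ)^(S ∩ insert N T).card), walsh, walsh]
  have h1 : ∀ S ∈ (range N).powerset,
      c S * (-1:ℝ)^(S ∩ insert N T).card = c S * (-1:ℝ)^(S ∩ T).card := by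
    intro S hS
    simp only [mem_powerset] at hS
    have hNS : N ∉ S := fun hc => (by simpa using hS hc : N < N).false
    rw [Finset.inter_insert_of_notMem hNS]
  have h2 : ∀ S ∈ (range N).powerset,
      c (insert N S) * (-1:ℝ)^((insert N S) ∩ insert N T).card
        = -(c (insert N S) * (-1:ℝ)^(S ∩ T).card) := by
    intro S hS
    simp only [mem_powerset] at hS
    have hNS : N ∉ S := fun hc => (by simpa using hS hc : N < N).false
    have he : (insert N S) ∩ insert N T = insert N (S ∩ T) := by
      ext x
      simp only [mem_inter, mem_insert]
      tauto
    rw [he, Finset.card_insert_of_notMem (fun hc => hNS (mem_of_mem_inter_left hc))]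
    rw [pow_succ]; ring
  rw [sum_congr rfl h1, sum_congr rfl h2, sum_neg_distrib]
  ring

lemma mink {ι : Type*} (s : Finset ι) (u v : ι → ℝ) (hu : ∀ i ∈ s, 0 ≤ u i)
    (hv : ∀ i ∈ s, 0 ≤ v i) (m : ℕ) (hm : 1 ≤ m) (W α β : ℝ) (hW : 0 < W)
    (hα : 0 ≤ α) (hβ : 0 ≤ β)
    (h1 : ∑ i ∈ s, u i ^ m ≤ W * α ^ m) (h2 : ∑ i ∈ s, v i ^ m ≤ W * β ^ m) :
    ∑ i ∈ s, (u i + v i) ^ m ≤ W * (α + β) ^ m := by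
  set p : ℝ := (m : ℝ) with hp
  have hp1 : (1:ℝ) ≤ p := by
    rw [hp]
    exact_mod_cast hm
  have hp0 : 0 < p := by linarith
  have hpne : p ≠ 0 := ne_of_gt hp0
  have erw1 : ∀ (x : ℝ), 0 ≤ x → x ^ (m:ℕ) = x ^ p := fun x hx => (Real.rpow_natCast x m).symm
  have key := Real.Lp_add_le_of_nonneg (s := s) (f := u) (g := v) (p := p) hp1 hu hv
  have hsu : ∑ i ∈ s, u i ^ p = ∑ i ∈ s, u i ^ m :=
    sum_congr rfl fun i hi => (erw1 _ (hu i hi)).symm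
  have hsv : ∑ i ∈ s, v i ^ p = ∑ i ∈ s, v i ^ m :=
    sum_congr rfl fun i hi => (erw1 _ (hv i hi)).symm
  have hsw : ∑ i ∈ s, (u i + v i) ^ p = ∑ i ∈ s, (u i + v i) ^ m :=
    sum_congr rfl fun i hi => (erw1 _ (add_nonneg (hu i hi) (hv i hi))).symm
  have hA : (∑ i ∈ s, u i ^ p) ^ (1/p) ≤ W^(1/p) * α := by
    have h1' : ∑ i ∈ s, u i ^ p ≤ W * α ^ p := by
      rw [hsu, ← erw1 α hα]; exact h1
    have hnn : 0 ≤ ∑ i ∈ s, u i ^ p := sum_nonneg fun i hi => Real.rpow_nonneg (hu i hi) p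
    calc (∑ i ∈ s, u i ^ p) ^ (1/p) ≤ (W * α^p)^(1/p) :=
          Real.rpow_le_rpow hnn h1' (by positivity)
      _ = W^(1/p) * α := by
          rw [Real.mul_rpow hW.le (Real.rpow_nonneg hα p), ← Real.rpow_mul hα,
            mul_one_div, div_self hpne, Real.rpow_one]
  have hB : (∑ i ∈ s, v i ^ p) ^ (1/p) ≤ W^(1/p) * β := by
    have h2' : ∑ i ∈ s, v i ^ p ≤ W * β ^ p := by
      rw [hsv, ← erw1 β hβ]; exact h2
    have hnn : 0 ≤ ∑ i ∈ s, v i ^ p := sum_nonneg fun i hi => Real.rpow_nonneg (hv i hi) p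
    calc (∑ i ∈ s, v i ^ p) ^ (1/p) ≤ (W * β^p)^(1/p) :=
          Real.rpow_le_rpow hnn h2' (by positivity)
      _ = W^(1/p) * β := by
          rw [Real.mul_rpow hW.le (Real.rpow_nonneg hβ p), ← Real.rpow_mul hβ,
            mul_one_div, div_self hpne, Real.rpow_one]
  have hC : (∑ i ∈ s, (u i + v i) ^ p) ^ (1/p) ≤ W^(1/p) * (α+β) := by
    rw [mul_add]
    exact key.trans (add_le_add hA hB)
  have hnn : 0 ≤ ∑ i ∈ s, (u i + v i)^p :=
    sum_nonneg fun i hi => Real.rpow_nonneg (add_nonneg (hu i hi) (hv i hi)) p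
  have hfin := Real.rpow_le_rpow (Real.rpow_nonneg hnn _) hC hp0.le
  rw [← Real.rpow_mul hnn, one_div, inv_mul_cancel₀ hpne, Real.rpow_one] at hfin
  have hrhs : (W^(p⁻¹) * (α+β))^p = W * (α+β)^m := by
    rw [Real.mul_rpow (Real.rpow_nonneg hW.le _) (add_nonneg hα hβ),
      ← Real.rpow_mul hW.le, inv_mul_cancel₀ hpne, Real.rpow_one, erw1 _ (add_nonneg hα hβ)]
  calc ∑ i ∈ s, (u i + v i) ^ m = ∑ i ∈ s, (u i + v i) ^ p := hsw.symm
    _ ≤ (W^(p⁻¹) * (α+β))^p := hfin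
    _ = W * (α+β)^m := hrhs


lemma hc (d : ℕ) : ∀ (N : ℕ) (c : Finset ℕ → ℝ) (m : ℕ), 1 ≤ m →
    (∀ S ∈ (range N).powerset, d < S.card → c S = 0) →
    ∑ T ∈ (range N).powerset, (walsh c N T)^(2*m)
      ≤ 2^N * (((2*m-1 : ℕ) : ℝ)^d * ∑ S ∈ (range N).powerset, c S ^ 2)^m := by
  induction d with
  | zero =>
    intro N c m hm hsupp
    have hw : ∀ T ∈ (range N).powerset, walsh c N T = c ∅ := by
      intro T _
      rw [walsh, Finset.sum_eq_single_of_mem ∅ (Finset.empty_mem_powerset _)]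
      · simp
      · intro S hS hne
        rw [hsupp S hS (Finset.card_pos.mpr (Finset.nonempty_iff_ne_empty.mpr hne)), zero_mul]
    rw [sum_congr rfl (fun T hT => by rw [hw T hT])]
    rw [Finset.sum_const, Finset.card_powerset, Finset.card_range, nsmul_eq_mul]
    have h1 : (c ∅)^(2*m) = ((c ∅)^2)^m := by rw [← pow_mul]
    have h2 : ((c ∅)^2)^m ≤ (∑ S ∈ (range N).powerset, c S ^ 2)^m := by
      apply pow_le_pow_left₀ (sq_nonneg _)
      exact Finset.single_le_sum (fun S _ => sq_nonneg (c S)) (Finset.empty_mem_powerset _)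
    rw [pow_zero, one_mul]
    push_cast
    calc (2:ℝ)^N * (c ∅)^(2*m) = (2:ℝ)^N * ((c ∅)^2)^m := by rw [h1]
      _ ≤ (2:ℝ)^N * (∑ S ∈ (range N).powerset, c S ^ 2)^m := by
          apply mul_le_mul_of_nonneg_left h2 (by positivity)
  | succ d ihd =>
    intro N
    induction N with
    | zero =>
      intro c m hm _
      simp only [range_zero, powerset_empty, sum_singleton]
      have hw : walsh c 0 ∅ = c ∅ := by
        rw [walsh]; simp
      rw [hw]
      have hκ : (1:ℝ) ≤ ((2*m-1 : ℕ) : ℝ) := by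
        exact_mod_cast (by omega : 1 ≤ 2*m-1)
      have h1 : (c ∅)^(2*m) = ((c ∅)^2)^m := by rw [← pow_mul]
      rw [h1, pow_zero, one_mul]
      apply pow_le_pow_left₀ (sq_nonneg _)
      calc (c ∅)^2 = 1 * (c ∅)^2 := by ring
        _ ≤ ((2*m-1:ℕ):ℝ)^(d+1) * (c ∅)^2 := by
            apply mul_le_mul_of_nonneg_right (one_le_pow₀ hκ) (sq_nonneg _)
    | succ N ihN =>
      intro c m hm hsupp
      set κ : ℝ := ((2*m-1 : ℕ) : ℝ) with hκdef
      have hκ1 : (1:ℝ) ≤ κ := by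
        rw [hκdef]; exact_mod_cast (by omega : 1 ≤ 2*m-1)
      have hκ0 : (0:ℝ) ≤ κ := by linarith
      set ch : Finset ℕ → ℝ := fun S => c (insert N S) with hch
      set g : Finset ℕ → ℝ := walsh c N with hg
      set h : Finset ℕ → ℝ := walsh ch N with hh
      have hsuppg : ∀ S ∈ (range N).powerset, d+1 < S.card → c S = 0 := by
        intro S hS hcard
        apply hsupp S _ hcard
        simp only [mem_powerset] at *
        exact hS.trans (Finset.range_subset_range.mpr (Nat.le_succ N))
      have hsupph : ∀ S ∈ (range N).powerset, d < S.card → ch S = 0 := by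
        intro S hS hcard
        simp only [mem_powerset] at hS
        have hNS : N ∉ S := fun hc => (by simpa using hS hc : N < N).false
        apply hsupp (insert N S)
        · simp only [mem_powerset]
          intro x hx
          rcases mem_insert.mp hx with rfl | hx'
          · exact self_mem_range_succ x
          · exact (Finset.range_subset_range.mpr (Nat.le_succ N)) (hS hx')
        · rw [Finset.card_insert_of_notMem hNS]; omega
      rw [powerset_succ_sum N (fun T => (walsh c (N+1) T)^(2*m)), ← sum_add_distrib]
      have hsplit : ∀ T ∈ (range N).powerset,
          (walsh c (N+1) T)^(2*m) + (walsh c (N+1) (insert N T))^(2*m)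
            = (g T + h T)^(2*m) + (g T - h T)^(2*m) := by
        intro T hT
        rw [walsh_succ_not N c T hT, walsh_succ_mem N c T hT]
      rw [sum_congr rfl hsplit]
      have htp : ∀ T ∈ (range N).powerset,
          (g T + h T)^(2*m) + (g T - h T)^(2*m) ≤ 2 * ((g T)^2 + κ * (h T)^2)^m :=
        fun T _ => two_point m (g T) (h T)
      have hmain : ∑ T ∈ (range N).powerset, ((g T)^2 + κ * (h T)^2)^m
          ≤ 2^N * ((κ^(d+1) * ∑ S ∈ (range N).powerset, c S ^ 2)
              + (κ^(d+1) * ∑ S ∈ (range N).powerset, ch S ^ 2))^m := by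
        apply mink ((range N).powerset) (fun T => (g T)^2) (fun T => κ * (h T)^2)
          (fun T _ => sq_nonneg _) (fun T _ => mul_nonneg hκ0 (sq_nonneg _)) m hm
          ((2:ℝ)^N) _ _ (by positivity)
          (by positivity) (by positivity)
        · have e : ∀ T, ((g T)^2)^m = (g T)^(2*m) := fun T => by rw [← pow_mul]
          rw [sum_congr rfl (fun T _ => e T)]
          exact ihN c m hm hsuppg
        · have e : ∀ T, (κ * (h T)^2)^m = κ^m * ((h T)^(2*m)) := fun T => by
            rw [mul_pow, ← pow_mul]
          rw [sum_congr rfl (fun T _ => e T), ← Finset.mul_sum]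
          have hih := ihd N ch m hm hsupph
          have e2 : ∀ X : ℝ, (κ^(d+1) * X)^m = κ^m * (κ^d * X)^m := by
            intro X
            have : κ^(d+1) * X = κ * (κ^d * X) := by rw [pow_succ]; ring
            rw [this, mul_pow]
          rw [e2]
          calc κ^m * ∑ T ∈ (range N).powerset, (h T)^(2*m)
              ≤ κ^m * (2^N * (κ^d * ∑ S ∈ (range N).powerset, ch S ^ 2)^m) := by
                apply mul_le_mul_of_nonneg_left hih (by positivity)
            _ = 2^N * (κ^m * (κ^d * ∑ S ∈ (range N).powerset, ch S ^ 2)^m) := by ring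
      have hVsplit : ∑ S ∈ (range (N+1)).powerset, c S ^ 2
          = ∑ S ∈ (range N).powerset, c S ^ 2 + ∑ S ∈ (range N).powerset, ch S ^ 2 :=
        powerset_succ_sum N (fun S => c S ^ 2)
      calc ∑ T ∈ (range N).powerset, ((g T + h T)^(2*m) + (g T - h T)^(2*m))
          ≤ ∑ T ∈ (range N).powerset, 2 * ((g T)^2 + κ * (h T)^2)^m := sum_le_sum htp
        _ = 2 * ∑ T ∈ (range N).powerset, ((g T)^2 + κ * (h T)^2)^m := by
            rw [Finset.mul_sum]
        _ ≤ 2 * (2^N * ((κ^(d+1) * ∑ S ∈ (range N).powerset, c S ^ 2)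
              + (κ^(d+1) * ∑ S ∈ (range N).powerset, ch S ^ 2))^m) := by
            apply mul_le_mul_of_nonneg_left hmain (by norm_num)
        _ = 2^(N+1) * (κ^(d+1) * ∑ S ∈ (range (N+1)).powerset, c S ^ 2)^m := by
            rw [hVsplit, mul_add]
            ring

lemma moment16 (N : ℕ) (c : Finset ℕ → ℝ) (σ : ℝ) (hσ : 0 < σ)
    (hsupp : ∀ S ∈ (range N).powerset, 2 < S.card → c S = 0)
    (hpars : ∑ S ∈ (range N).powerset, c S ^ 2 = σ^2) (m : ℕ) :
    ∑ T ∈ (range N).powerset, (walsh c N T)^(2*m)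
      ≤ 2^N * (16^m * (Nat.factorial (2*m) : ℝ) * σ^(2*m)) := by
  rcases Nat.eq_zero_or_pos m with rfl | hm
  · simp only [mul_zero, pow_zero, Nat.factorial_zero, Nat.cast_one, mul_one, one_mul]
    rw [Finset.sum_const, Finset.card_powerset, Finset.card_range, nsmul_eq_mul, mul_one]
    push_cast
    exact le_refl _
  · have h := hc 2 N c m hm hsupp
    rw [hpars] at h
    refine h.trans ?_
    have hκ : ((2*m-1 : ℕ) : ℝ) ≤ ((2*m : ℕ) : ℝ) := by
      exact_mod_cast (by omega : 2*m-1 ≤ 2*m)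
    have hκ0 : (0:ℝ) ≤ ((2*m-1:ℕ):ℝ) := Nat.cast_nonneg _
    have h1 : (((2*m-1:ℕ):ℝ)^2 * σ^2)^m = ((2*m-1:ℕ):ℝ)^(2*m) * σ^(2*m) := by
      rw [mul_pow, ← pow_mul, ← pow_mul]
    have h2 : ((2*m-1:ℕ):ℝ)^(2*m) ≤ ((2*m:ℕ):ℝ)^(2*m) := pow_le_pow_left₀ hκ0 hκ _
    have h3 : ((2*m:ℕ):ℝ)^(2*m) ≤ Real.exp 1 ^ (2*m) * (Nat.factorial (2*m) : ℝ) :=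
      fact_bound (2*m)
    have h4 : Real.exp 1 ^ (2*m) ≤ (16:ℝ)^m := by
      rw [pow_mul]
      exact pow_le_pow_left₀ (by positivity) exp_one_sq_le m
    have h5 : ((2*m-1:ℕ):ℝ)^(2*m) ≤ 16^m * (Nat.factorial (2*m) : ℝ) := by
      refine (h2.trans h3).trans ?_
      apply mul_le_mul_of_nonneg_right h4 (Nat.cast_nonneg _)
    rw [h1]
    have := mul_le_mul_of_nonneg_right h5 (by positivity : (0:ℝ) ≤ σ^(2*m))
    apply mul_le_mul_of_nonneg_left _ (by positivity : (0:ℝ) ≤ (2:ℝ)^N)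
    linarith

lemma exp_sum_bound (N : ℕ) (c : Finset ℕ → ℝ) (σ : ℝ) (hσ : 0 < σ)
    (hsupp : ∀ S ∈ (range N).powerset, 2 < S.card → c S = 0)
    (hpars : ∑ S ∈ (range N).powerset, c S ^ 2 = σ^2) :
    ∑ T ∈ (range N).powerset, (Real.exp (|walsh c N T| / (16*σ)) - 1)
      ≤ 2^N * (47/70) := by
  set l : ℝ := 16*σ with hl
  have hl0 : 0 < l := by positivity
  set x : Finset ℕ → ℝ := fun T => |walsh c N T| / l with hx
  have hx0 : ∀ T, 0 ≤ x T := fun T => div_nonneg (abs_nonneg _) hl0.le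
  have hS : ∀ j : ℕ, ∑ T ∈ (range N).powerset, x T ^ (2*j)
      ≤ 2^N * ((Nat.factorial (2*j) : ℝ) * (1/16)^j) := by
    intro j
    have e : ∀ T, x T^(2*j) = (walsh c N T)^(2*j) * (l^(2*j))⁻¹ := by
      intro T
      rw [hx]
      rw [div_pow, pow_mul, sq_abs, ← pow_mul, div_eq_mul_inv]
    rw [sum_congr rfl (fun T _ => e T), ← Finset.sum_mul]
    have hm16 := moment16 N c σ hσ hsupp hpars j
    have hstep := mul_le_mul_of_nonneg_right hm16 (by positivity : (0:ℝ) ≤ (l^(2*j))⁻¹)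
    refine hstep.trans (le_of_eq ?_)
    rw [hl]
    have h16 : ((16:ℝ)*σ)^(2*j) = 16^j * 16^j * σ^(2*j) := by
      rw [mul_pow, two_mul, pow_add]
    rw [h16]
    have hne1 : (16:ℝ)^j ≠ 0 := by positivity
    have hne2 : σ^(2*j) ≠ 0 := by positivity
    field_simp
    rw [← mul_pow]; norm_num
  have hAM : ∀ j : ℕ, ∑ T ∈ (range N).powerset, x T ^ (2*j+1)
      ≤ (∑ T ∈ (range N).powerset, x T ^ (2*j)
          + ∑ T ∈ (range N).powerset, x T ^ (2*j+2)) / 2 := by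
    intro j
    rw [div_eq_mul_inv, ← sum_add_distrib, Finset.sum_mul]
    apply sum_le_sum
    intro T _
    have hnn := mul_nonneg (pow_nonneg (hx0 T) (2*j)) (sq_nonneg (x T - 1))
    have hid : x T^(2*j)*(x T-1)^2 = x T^(2*j+2) - 2*(x T^(2*j+1)) + x T^(2*j) := by ring
    rw [hid] at hnn
    linarith
  have hexp : ∀ T ∈ (range N).powerset,
      Real.exp (|walsh c N T| / (16*σ)) - 1
        = ∑' k : ℕ, (x T)^(k+1)/(Nat.factorial (k+1) : ℝ) := by
    intro T _
    have hxs : Real.exp (x T) = ∑' n : ℕ, (x T)^n / (Nat.factorial n : ℝ) := by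
      rw [Real.exp_eq_exp_ℝ, NormedSpace.exp_eq_tsum_div]
    have : Real.exp (|walsh c N T| / (16*σ)) = Real.exp (x T) := by rw [hx, hl]
    rw [this, hxs, Summable.tsum_eq_zero_add (Real.summable_pow_div_factorial (x T))]
    simp
  have hgoal1 : ∑ T ∈ (range N).powerset, (Real.exp (|walsh c N T| / (16*σ)) - 1)
      = ∑' k : ℕ, ∑ T ∈ (range N).powerset, (x T)^(k+1)/(Nat.factorial (k+1) : ℝ) := by
    rw [sum_congr rfl hexp]
    exact (Summable.tsum_finsetSum (fun T _ => (summable_nat_add_iff 1).mpr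
      (Real.summable_pow_div_factorial (x T)))).symm
  rw [hgoal1]
  set u : ℕ → ℝ := fun k => ∑ T ∈ (range N).powerset, (x T)^(k+1)/(Nat.factorial (k+1) : ℝ)
    with hu
  have hu0 : ∀ k, 0 ≤ u k := fun k =>
    sum_nonneg fun T _ => div_nonneg (pow_nonneg (hx0 T) _) (Nat.cast_nonneg _)
  have husum : ∀ k, u k = (∑ T ∈ (range N).powerset, (x T)^(k+1)) / (Nat.factorial (k+1) : ℝ) := by
    intro k; rw [hu]; rw [Finset.sum_div]
  have hfpos : ∀ j : ℕ, (0:ℝ) < (Nat.factorial j : ℝ) := fun j => by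
    exact_mod_cast Nat.factorial_pos j
  -- even-index terms u (2k) (power 2k+1)
  have hbE : ∀ k, u (2*k) ≤ 2^N * ((1/2)*(1/16:ℝ)^k + (1/16)*(1/8)^k) := by
    intro k
    have he : 2*k+1 = (2*k)+1 := rfl
    have h1 : u (2*k) = (∑ T ∈ (range N).powerset, (x T)^(2*k+1)) / (Nat.factorial (2*k+1) : ℝ) := husum (2*k)
    rw [h1]
    rw [div_le_iff₀ (hfpos (2*k+1))]
    have hAM' := hAM k
    have hSa := hS k
    have hSb := hS (k+1)
    have hf1 : (Nat.factorial (2*k+1) : ℝ) = (2*k+1) * (Nat.factorial (2*k) : ℝ) := by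
      rw [Nat.factorial_succ]; push_cast; ring
    have hf2 : (Nat.factorial (2*(k+1)) : ℝ) = (2*k+2) * (Nat.factorial (2*k+1) : ℝ) := by
      have : 2*(k+1) = (2*k+1)+1 := by ring
      rw [this, Nat.factorial_succ]; push_cast; ring
    have hq0 : (0:ℝ) ≤ (1/16:ℝ)^k := by positivity
    -- key termwise bounds
    have key1 : 2^N * ((Nat.factorial (2*k) : ℝ) * (1/16)^k)
        ≤ 2^N * ((1/16)^k * (Nat.factorial (2*k+1) : ℝ)) := by
      have : (Nat.factorial (2*k) : ℝ) ≤ (Nat.factorial (2*k+1) : ℝ) := by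
        exact_mod_cast Nat.factorial_le (Nat.le_succ _)
      have h' := mul_le_mul_of_nonneg_right this hq0
      apply mul_le_mul_of_nonneg_left _ (by positivity : (0:ℝ) ≤ (2:ℝ)^N)
      linarith [h']
    have key2 : 2^N * ((Nat.factorial (2*(k+1)) : ℝ) * (1/16)^(k+1))
        ≤ 2^N * ((1/8)^k * (1/8) * (Nat.factorial (2*k+1) : ℝ)) := by
      rw [hf2]
      apply mul_le_mul_of_nonneg_left _ (by positivity : (0:ℝ) ≤ (2:ℝ)^N)
      have hc1 : ((2*k+2 : ℕ) : ℝ) ≤ 2^(k+1) := by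
        have : (2*k+2 : ℕ) ≤ 2^(k+1) := by
          have := Nat.lt_two_pow_self (n := k)
          calc (2*k+2 : ℕ) = 2*(k+1) := by ring
            _ ≤ 2*2^k := by omega
            _ = 2^(k+1) := by rw [pow_succ]; ring
        exact_mod_cast this
      have hc2 : ((1/8:ℝ))^(k+1) = 2^(k+1) * (1/16)^(k+1) := by
        rw [← mul_pow]; norm_num
      have hc3 : ((2*k+2:ℝ)) * (1/16)^(k+1) ≤ (1/8:ℝ)^(k+1) := by
        rw [hc2]
        apply mul_le_mul_of_nonneg_right _ (by positivity)
        push_cast at hc1 ⊢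
        linarith
      calc (2*k+2:ℝ) * (Nat.factorial (2*k+1) : ℝ) * (1/16)^(k+1)
          = ((2*k+2:ℝ) * (1/16)^(k+1)) * (Nat.factorial (2*k+1) : ℝ) := by ring
        _ ≤ (1/8:ℝ)^(k+1) * (Nat.factorial (2*k+1) : ℝ) := by
            apply mul_le_mul_of_nonneg_right hc3 (hfpos _).le
        _ = (1/8)^k * (1/8) * (Nat.factorial (2*k+1) : ℝ) := by rw [pow_succ]
    have hSb' := hS (k+1)
    rw [show 2*(k+1) = 2*k+2 from by ring] at hSb'
    have hup : (∑ T ∈ (range N).powerset, x T ^ (2*k)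
          + ∑ T ∈ (range N).powerset, x T ^ (2*k+2)) / 2
        ≤ (2^N * ((1/16)^k * (Nat.factorial (2*k+1) : ℝ))
            + 2^N * ((1/8)^k * (1/8) * (Nat.factorial (2*k+1) : ℝ))) / 2 := by
      gcongr
      · exact hSa.trans key1
      · exact hSb'.trans (by rw [show (2*(k+1)) = 2*k+2 from by ring] at key2; exact key2)
    refine (hAM'.trans hup).trans (le_of_eq ?_)
    ring
  have hbO : ∀ k, u (2*k+1) ≤ 2^N * ((1/16) * (1/16:ℝ)^k) := by
    intro k
    have h1 : u (2*k+1) = (∑ T ∈ (range N).powerset, (x T)^(2*k+2))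
        / (Nat.factorial (2*k+2) : ℝ) := husum (2*k+1)
    rw [h1, div_le_iff₀ (hfpos (2*k+2))]
    have hSb := hS (k+1)
    rw [show 2*(k+1) = 2*k+2 from by ring] at hSb
    refine hSb.trans (le_of_eq ?_)
    rw [show (1/16:ℝ)^(k+1) = (1/16)*(1/16)^k from by rw [pow_succ]; ring]
    ring
  have hgs1 : Summable (fun k : ℕ => (1/16:ℝ)^k) :=
    summable_geometric_of_lt_one (by norm_num) (by norm_num)
  have hgs2 : Summable (fun k : ℕ => (1/8:ℝ)^k) :=
    summable_geometric_of_lt_one (by norm_num) (by norm_num)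
  have hbEsum : Summable (fun k => 2^N * ((1/2)*(1/16:ℝ)^k + (1/16)*(1/8)^k)) :=
    ((hgs1.mul_left (1/2)).add (hgs2.mul_left (1/16))).mul_left _
  have hbOsum : Summable (fun k => 2^N * ((1/16) * (1/16:ℝ)^k)) :=
    (hgs1.mul_left (1/16)).mul_left _
  have hE : Summable (fun k => u (2*k)) := Summable.of_nonneg_of_le (fun k => hu0 _) hbE hbEsum
  have hO : Summable (fun k => u (2*k+1)) := Summable.of_nonneg_of_le (fun k => hu0 _) hbO hbOsum
  rw [← tsum_even_add_odd hE hO]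
  have tE : ∑' k, u (2*k) ≤ ∑' k, 2^N * ((1/2)*(1/16:ℝ)^k + (1/16)*(1/8)^k) :=
    Summable.tsum_le_tsum hbE hE hbEsum
  have tO : ∑' k, u (2*k+1) ≤ ∑' k, 2^N * ((1/16)*(1/16:ℝ)^k) :=
    Summable.tsum_le_tsum hbO hO hbOsum
  have vE : ∑' k, 2^N * ((1/2)*(1/16:ℝ)^k + (1/16)*(1/8)^k)
      = 2^N * ((1/2)*(16/15) + (1/16)*(8/7)) := by
    rw [tsum_mul_left, Summable.tsum_add (hgs1.mul_left _) (hgs2.mul_left _), tsum_mul_left, tsum_mul_left,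
      tsum_geometric_of_lt_one (by norm_num) (by norm_num),
      tsum_geometric_of_lt_one (by norm_num) (by norm_num)]
    norm_num
  have vO : ∑' k, 2^N * ((1/16)*(1/16:ℝ)^k) = 2^N * ((1/16)*(16/15)) := by
    rw [tsum_mul_left, tsum_mul_left,
      tsum_geometric_of_lt_one (by norm_num) (by norm_num)]
    norm_num
  calc ∑' k, u (2*k) + ∑' k, u (2*k+1)
      ≤ 2^N * ((1/2)*(16/15) + (1/16)*(8/7)) + 2^N * ((1/16)*(16/15)) := by
        rw [← vE, ← vO]; exact add_le_add tE tO
    _ ≤ 2^N * (47/70) := by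
        have h2N : (0:ℝ) ≤ 2^N := by positivity
        nlinarith

lemma negone_div_pow (s j : ℕ) : (-1:ℝ)^(j / 2^s) = if j.testBit s then -1 else 1 := by
  rcases Nat.even_or_odd (j / 2^s) with h | h
  · rw [h.neg_one_pow, if_neg]
    rw [Nat.testBit_eq_decide_div_mod_eq]
    simp [Nat.even_iff.mp h]
  · rw [h.neg_one_pow, if_pos]
    rw [Nat.testBit_eq_decide_div_mod_eq]
    simp [Nat.odd_iff.mp h]

lemma testBit_low (j N b : ℕ) (hb : b < N) : (2^N + j).testBit b = j.testBit b := by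
  rw [Nat.testBit_eq_decide_div_mod_eq, Nat.testBit_eq_decide_div_mod_eq]
  have hdvd : 2^b ∣ 2^N := pow_dvd_pow 2 hb.le
  rw [Nat.add_div_of_dvd_right hdvd, Nat.pow_div hb.le (by norm_num)]
  have h2 : 2 ∣ 2^(N-b) := dvd_pow_self 2 (by omega)
  obtain ⟨r, hr⟩ := h2
  rw [hr, Nat.mul_add_mod]

lemma testBit_high (j N : ℕ) (hj : j < 2^N) : (2^N + j).testBit N = true := by
  rw [Nat.testBit_two_pow_add_eq, Nat.testBit_lt_two_pow hj]
  rfl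

def phi (N j : ℕ) : Finset ℕ := (Finset.range N).filter (fun b => j.testBit b)

lemma sum_phi (N : ℕ) : ∀ (G : Finset ℕ → ℝ),
    ∑ j ∈ range (2^N), G (phi N j) = ∑ T ∈ (range N).powerset, G T := by
  induction N with
  | zero =>
    intro G
    simp [phi]
  | succ N ih =>
    intro G
    have h2 : 2^(N+1) = 2^N + 2^N := by rw [pow_succ]; ring
    rw [h2, Finset.sum_range_add, powerset_succ_sum N G]
    congr 1
    · rw [← ih G]
      apply sum_congr rfl
      intro j hj
      simp only [mem_range] at hj
      congr 1
      unfold phi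
      rw [range_add_one, Finset.filter_insert, if_neg (by rw [Nat.testBit_lt_two_pow hj]; simp)]
    · rw [← ih (fun T => G (insert N T))]
      apply sum_congr rfl
      intro j hj
      simp only [mem_range] at hj
      congr 1
      unfold phi
      rw [range_add_one, Finset.filter_insert, if_pos (testBit_high j N hj)]
      congr 1
      apply Finset.filter_congr
      intro b hb
      simp only [mem_range] at hb
      rw [testBit_low j N b hb]

def eS (n i j : ℕ) : Finset ℕ := if i = 1 then {n - j} else {n - i, n - j}

noncomputable def coef (n : ℕ) (a : ℕ → ℕ → ℝ) (S : Finset ℕ) : ℝ :=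
  ∑ i ∈ Icc 1 n, ∑ j ∈ Ioc i n, if eS n i j = S then a i j else 0

lemma eS_mem {n i j : ℕ} (hn : 2 ≤ n) (hi : i ∈ Icc 1 n) (hj : j ∈ Ioc i n) :
    eS n i j ∈ (range (n-1)).powerset := by
  simp only [mem_Icc] at hi
  simp only [mem_Ioc] at hj
  simp only [mem_powerset, eS]
  split_ifs
  · intro x hx
    simp only [Finset.mem_singleton] at hx
    subst hx
    simp only [mem_range]
    omega
  · intro x hx
    simp only [Finset.mem_insert, Finset.mem_singleton] at hx
    rcases hx with rfl | rfl <;> (simp only [mem_range]; omega)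

lemma eS_card (n i j : ℕ) : (eS n i j).card ≤ 2 := by
  unfold eS
  split_ifs
  · simp
  · exact (Finset.card_insert_le _ _).trans (by simp)

lemma coef_supp (n : ℕ) (a : ℕ → ℕ → ℝ) :
    ∀ S ∈ (range (n-1)).powerset, 2 < S.card → coef n a S = 0 := by
  intro S _ hcard
  apply Finset.sum_eq_zero
  intro i _
  apply Finset.sum_eq_zero
  intro j _
  rw [if_neg]
  intro h
  have := eS_card n i j
  rw [h] at this
  omega

lemma coef_collapse {n : ℕ} (hn : 2 ≤ n) (a : ℕ → ℕ → ℝ) (w : Finset ℕ → ℝ) :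
    ∑ S ∈ (range (n-1)).powerset, coef n a S * w S
      = ∑ i ∈ Icc 1 n, ∑ j ∈ Ioc i n, a i j * w (eS n i j) := by
  unfold coef
  simp only [Finset.sum_mul, ite_mul, zero_mul]
  rw [Finset.sum_comm]
  apply sum_congr rfl
  intro i hi
  rw [Finset.sum_comm]
  apply sum_congr rfl
  intro j hj
  rw [Finset.sum_ite_eq ((range (n-1)).powerset) (eS n i j) (fun S => a i j * w S),
    if_pos (eS_mem hn hi hj)]

lemma eS_inj {n i j i' j' : ℕ} (hi : i ∈ Icc 1 n) (hj : j ∈ Ioc i n)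
    (hi' : i' ∈ Icc 1 n) (hj' : j' ∈ Ioc i' n) (h : eS n i' j' = eS n i j) :
    i' = i ∧ j' = j := by
  simp only [mem_Icc] at hi hi'
  simp only [mem_Ioc] at hj hj'
  unfold eS at h
  split_ifs at h with h1 h2 h2
  · have := Finset.singleton_injective h
    omega
  · -- {n-j'} = {n-i, n-j} with i ≠ 1
    have e1 : n - i ∈ ({n - j'} : Finset ℕ) := by rw [h]; simp
    have e2 : n - j ∈ ({n - j'} : Finset ℕ) := by rw [h]; simp
    simp only [Finset.mem_singleton] at e1 e2
    omega
  · have e1 : n - i' ∈ ({n - j} : Finset ℕ) := by rw [← h]; simp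
    have e2 : n - j' ∈ ({n - j} : Finset ℕ) := by rw [← h]; simp
    simp only [Finset.mem_singleton] at e1 e2
    omega
  · have e1 : n - i' ∈ ({n - i, n - j} : Finset ℕ) := by rw [← h]; simp
    have e2 : n - j' ∈ ({n - i, n - j} : Finset ℕ) := by rw [← h]; simp
    have e3 : n - i ∈ ({n - i', n - j'} : Finset ℕ) := by rw [h]; simp
    have e4 : n - j ∈ ({n - i', n - j'} : Finset ℕ) := by rw [h]; simp
    simp only [Finset.mem_insert, Finset.mem_singleton] at e1 e2 e3 e4
    rcases e1 with e1 | e1 <;> rcases e2 with e2 | e2 <;>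
      rcases e3 with e3 | e3 <;> rcases e4 with e4 | e4 <;> omega

lemma coef_sq {n : ℕ} (hn : 2 ≤ n) (a : ℕ → ℕ → ℝ) :
    ∑ S ∈ (range (n-1)).powerset, coef n a S ^ 2
      = ∑ i ∈ Icc 1 n, ∑ j ∈ Ioc i n, a i j ^ 2 := by
  have h1 : ∀ S, coef n a S ^ 2 = coef n a S * coef n a S := fun S => sq (coef n a S) ▸ by ring
  simp only [sq]
  rw [coef_collapse hn a (coef n a)]
  apply sum_congr rfl
  intro i hi
  apply sum_congr rfl
  intro j hj
  congr 1
  unfold coef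
  have hout : ∀ i' ∈ Icc 1 n,
      (∑ j' ∈ Ioc i' n, if eS n i' j' = eS n i j then a i' j' else 0)
        = if i' = i then a i j else 0 := by
    intro i' hi'
    by_cases hii : i' = i
    · subst hii
      rw [if_pos rfl]
      rw [Finset.sum_eq_single_of_mem j hj]
      · rw [if_pos rfl]
      · intro j' hj' hne
        rw [if_neg]
        intro he
        exact hne (eS_inj hi hj hi hj' he).2
    · rw [if_neg hii]
      apply Finset.sum_eq_zero
      intro j' hj'
      rw [if_neg]
      intro he
      exact hii (eS_inj hi hj hi' hj' he).1
  rw [sum_congr rfl hout, Finset.sum_ite_eq' (Icc 1 n) i (fun _ => a i j), if_pos hi]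

lemma floor_block {N j k : ℕ} (hk1 : 1 ≤ k) (hkn : k ≤ N + 1) (hj : j < 2^N) {t : ℝ}
    (ht1 : (j:ℝ)/2^N ≤ t) (ht2 : t < ((j:ℝ)+1)/2^N) :
    ⌊(2:ℝ)^(k-1) * t⌋ = ((j / 2^(N+1-k) : ℕ) : ℤ) := by
  set s := N + 1 - k with hs
  set q := j / 2^s with hq
  have hks : k - 1 + s = N := by omega
  have hpow : (2:ℝ)^(k-1) * (2:ℝ)^s = 2^N := by rw [← pow_add, hks]
  have hN0 : (0:ℝ) < 2^N := by positivity
  have hs0 : (0:ℝ) < 2^s := by positivity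
  have hu1 : (j:ℝ) ≤ t * 2^N := by
    rw [div_le_iff₀ hN0] at ht1; linarith
  have hu2 : t * 2^N < (j:ℝ)+1 := by
    rw [lt_div_iff₀ hN0] at ht2; linarith
  have hq1 : (q:ℝ) * 2^s ≤ (j:ℝ) := by
    have := Nat.div_mul_le_self j (2^s)
    exact_mod_cast this
  have hq2 : (j:ℝ) + 1 ≤ ((q:ℝ)+1) * 2^s := by
    have h := (Nat.div_lt_iff_lt_mul (show 0 < 2^s by positivity)).mp (Nat.lt_succ_self q)
    have : (j:ℕ) + 1 ≤ (q+1) * 2^s := h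
    exact_mod_cast this
  have key : (2:ℝ)^(k-1) * t = (t * 2^N) / 2^s := by
    rw [eq_div_iff (ne_of_gt hs0), ← hpow]; ring
  have hle : (q:ℝ) ≤ (t * 2^N)/2^s := by
    rw [le_div_iff₀ hs0]
    exact hq1.trans hu1
  have hlt : (t*2^N)/2^s < (q:ℝ)+1 := by
    rw [div_lt_iff₀ hs0]
    exact hu2.trans_le hq2
  rw [key]
  rw [Int.floor_eq_iff]
  constructor
  · exact_mod_cast hle
  · push_cast
    exact hlt

lemma rademacher_block {N j k : ℕ} (hk1 : 1 ≤ k) (hkn : k ≤ N + 1) (hj : j < 2^N) {t : ℝ}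
    (ht1 : (j:ℝ)/2^N ≤ t) (ht2 : t < ((j:ℝ)+1)/2^N) :
    rademacher k t = if j.testBit (N+1-k) then -1 else 1 := by
  unfold rademacher
  rw [floor_block hk1 hkn hj ht1 ht2, zpow_natCast, negone_div_pow]

lemma pair_inter_card {x y : ℕ} (hxy : x ≠ y) (T : Finset ℕ) :
    (({x, y} : Finset ℕ) ∩ T).card = (if x ∈ T then 1 else 0) + (if y ∈ T then 1 else 0) := by
  by_cases hx : x ∈ T <;> by_cases hy : y ∈ T
  · rw [if_pos hx, if_pos hy]
    have he : ({x,y} : Finset ℕ) ∩ T = {x,y} := by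
      rw [Finset.inter_eq_left]
      intro z hz
      rcases Finset.mem_insert.mp hz with rfl | h
      · exact hx
      · rw [Finset.mem_singleton] at h; subst h; exact hy
    rw [he, Finset.card_insert_of_notMem (by simp [hxy]), Finset.card_singleton]
  · rw [if_pos hx, if_neg hy]
    have he : ({x,y} : Finset ℕ) ∩ T = {x} := by
      ext z
      simp only [Finset.mem_inter, Finset.mem_insert, Finset.mem_singleton]
      constructor
      · rintro ⟨rfl | rfl, hzT⟩
        · rfl
        · exact absurd hzT hy
      · rintro rfl; exact ⟨Or.inl rfl, hx⟩
    rw [he, Finset.card_singleton]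
  · rw [if_neg hx, if_pos hy]
    have he : ({x,y} : Finset ℕ) ∩ T = {y} := by
      ext z
      simp only [Finset.mem_inter, Finset.mem_insert, Finset.mem_singleton]
      constructor
      · rintro ⟨rfl | rfl, hzT⟩
        · exact absurd hzT hx
        · rfl
      · rintro rfl; exact ⟨Or.inr rfl, hy⟩
    rw [he, Finset.card_singleton]
  · rw [if_neg hx, if_neg hy]
    have he : ({x,y} : Finset ℕ) ∩ T = ∅ := by
      ext z
      simp only [Finset.mem_inter, Finset.mem_insert, Finset.mem_singleton,
        Finset.notMem_empty, iff_false, not_and]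
      rintro (rfl | rfl)
      · exact hx
      · exact hy
    rw [he, Finset.card_empty]

lemma chaos_block {n : ℕ} (hn : 2 ≤ n) (a : ℕ → ℕ → ℝ) {j : ℕ} (hj : j < 2^(n-1)) {t : ℝ}
    (ht1 : (j:ℝ)/2^(n-1) ≤ t) (ht2 : t < ((j:ℝ)+1)/2^(n-1)) :
    ∑ i ∈ Icc 1 n, ∑ j' ∈ Ioc i n, a i j' * (rademacher i t * rademacher j' t)
      = walsh (coef n a) (n-1) (phi (n-1) j) := by
  rw [walsh, coef_collapse hn a (fun S => (-1:ℝ)^((S ∩ phi (n-1) j).card))]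
  apply sum_congr rfl
  intro i hi
  apply sum_congr rfl
  intro j' hj'
  congr 1
  simp only [mem_Icc] at hi
  simp only [mem_Ioc] at hj'
  have hnN : n - 1 + 1 = n := by omega
  have hri : rademacher i t = if j.testBit (n - i) then -1 else 1 := by
    have := rademacher_block (N := n-1) (k := i) (by omega) (by omega) hj ht1 ht2
    rwa [show n - 1 + 1 - i = n - i from by omega] at this
  have hrj : rademacher j' t = if j.testBit (n - j') then -1 else 1 := by
    have := rademacher_block (N := n-1) (k := j') (by omega) (by omega) hj ht1 ht2
    rwa [show n - 1 + 1 - j' = n - j' from by omega] at this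
  have hmem : ∀ x, x < n - 1 → (x ∈ phi (n-1) j ↔ j.testBit x) := by
    intro x hx
    simp [phi, Finset.mem_filter, Finset.mem_range, hx]
  by_cases hi1 : i = 1
  · subst hi1
    have h1 : rademacher 1 t = 1 := by
      rw [hri, Nat.testBit_lt_two_pow hj]
      simp
    have hxlt : n - j' < n - 1 := by omega
    rw [h1, one_mul, hrj, show eS n 1 j' = {n - j'} from by rw [eS, if_pos rfl]]
    by_cases hb : j.testBit (n - j')
    · rw [if_pos hb, Finset.singleton_inter_of_mem ((hmem _ hxlt).mpr hb),
        Finset.card_singleton, pow_one]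
    · rw [if_neg hb, Finset.singleton_inter_of_notMem (fun hc => hb ((hmem _ hxlt).mp hc)),
        Finset.card_empty, pow_zero]
  · have hxlt1 : n - i < n - 1 := by omega
    have hxlt2 : n - j' < n - 1 := by omega
    have hxy : n - i ≠ n - j' := by omega
    rw [show eS n i j' = {n-i, n-j'} from by rw [eS, if_neg hi1]]
    rw [pair_inter_card hxy, hri, hrj]
    by_cases hb1 : j.testBit (n-i) <;> by_cases hb2 : j.testBit (n-j') <;>
      simp [hb1, hb2, (hmem _ hxlt1), (hmem _ hxlt2)]

lemma transfer {n : ℕ} (hn : 2 ≤ n) (a : ℕ → ℕ → ℝ) (F : ℝ → ℝ) :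
    ∫ t in Set.Icc (0:ℝ) 1,
        F (∑ i ∈ Icc 1 n, ∑ j ∈ Ioc i n, a i j * (rademacher i t * rademacher j t))
      = (∑ T ∈ (range (n-1)).powerset, F (walsh (coef n a) (n-1) T)) / 2^(n-1) := by
  set N := n - 1 with hN
  set V : ℕ → ℝ := fun j => F (walsh (coef n a) N (phi N j)) with hV
  set g : ℝ → ℝ := fun t => ∑ j ∈ range (2^N),
    Set.indicator (Set.Ico ((j:ℝ)/2^N) (((j:ℝ)+1)/2^N)) (fun _ => V j) t with hg
  rw [MeasureTheory.integral_Icc_eq_integral_Ico]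
  have hpos : (0:ℝ) < 2^N := by positivity
  have heq : Set.EqOn
      (fun t => F (∑ i ∈ Icc 1 n, ∑ j ∈ Ioc i n, a i j * (rademacher i t * rademacher j t)))
      g (Set.Ico (0:ℝ) 1) := by
    intro t ht
    obtain ⟨ht0, ht1⟩ := ht
    set j₀ := ⌊t * 2^N⌋₊ with hj₀
    have hj₀lt : j₀ < 2^N := by
      have h1 : t * 2^N < ((2^N : ℕ) : ℝ) := by push_cast; nlinarith
      exact (Nat.floor_lt (by positivity)).mpr h1
    have hb1 : (j₀:ℝ)/2^N ≤ t := by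
      rw [div_le_iff₀ hpos]
      exact Nat.floor_le (by positivity)
    have hb2 : t < ((j₀:ℝ)+1)/2^N := by
      rw [lt_div_iff₀ hpos]
      have := Nat.lt_floor_add_one (t * 2^N)
      linarith
    have hgt : g t = V j₀ := by
      rw [hg]
      simp only
      rw [Finset.sum_eq_single_of_mem j₀ (Finset.mem_range.mpr hj₀lt)]
      · exact Set.indicator_of_mem (Set.mem_Ico.mpr ⟨hb1, hb2⟩) (fun _ => V j₀)
      · intro b hb hne
        apply Set.indicator_of_notMem
        rintro ⟨hm1, hm2⟩
        apply hne
        have h1 : (b:ℝ) ≤ t * 2^N := by rw [div_le_iff₀ hpos] at hm1; linarith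
        have h2 : t * 2^N < (b:ℝ)+1 := by rw [lt_div_iff₀ hpos] at hm2; linarith
        have h3 : (j₀:ℝ) ≤ t*2^N := Nat.floor_le (by positivity)
        have h4 : t*2^N < (j₀:ℝ)+1 := Nat.lt_floor_add_one _
        have hc1 : (b:ℝ) < (j₀:ℝ)+1 := lt_of_le_of_lt h1 h4
        have hc2 : (j₀:ℝ) < (b:ℝ)+1 := lt_of_le_of_lt h3 h2
        have hb' : b < j₀ + 1 := by exact_mod_cast hc1
        have hj' : j₀ < b + 1 := by exact_mod_cast hc2
        omega
    rw [hgt, hV]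
    simp only
    congr 1
    exact chaos_block hn a hj₀lt hb1 hb2
  rw [MeasureTheory.setIntegral_congr_fun measurableSet_Ico heq, hg]
  rw [MeasureTheory.integral_finset_sum]
  · have hval : ∀ j ∈ range (2^N), (∫ t in Set.Ico (0:ℝ) 1,
        Set.indicator (Set.Ico ((j:ℝ)/2^N) (((j:ℝ)+1)/2^N)) (fun _ => V j) t)
        = (1/2^N) * V j := by
      intro j hj
      simp only [Finset.mem_range] at hj
      rw [MeasureTheory.setIntegral_indicator measurableSet_Ico]
      have hsub : Set.Ico ((j:ℝ)/2^N) (((j:ℝ)+1)/2^N) ⊆ Set.Ico (0:ℝ) 1 := by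
        apply Set.Ico_subset_Ico
        · positivity
        · rw [div_le_one hpos]
          have h1 : (j:ℕ)+1 ≤ 2^N := hj
          have h2 : ((j:ℝ))+1 ≤ ((2^N : ℕ):ℝ) := by exact_mod_cast h1
          push_cast at h2
          linarith
      rw [Set.inter_eq_self_of_subset_right hsub, MeasureTheory.setIntegral_const,
        Real.volume_real_Ico]
      have hdiff : ((j:ℝ)+1)/2^N - (j:ℝ)/2^N = 1/2^N := by ring
      rw [hdiff, max_eq_left (by positivity), smul_eq_mul]
    rw [Finset.sum_congr rfl hval, ← Finset.mul_sum, one_div, inv_mul_eq_div]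
    congr 1
    exact sum_phi N (fun T => F (walsh (coef n a) N T))
  · intro j hj
    apply MeasureTheory.Integrable.indicator _ measurableSet_Ico
    refine MeasureTheory.integrableOn_const ?_ enorm_ne_top
    rw [Real.volume_Ico]
    exact ENNReal.ofReal_ne_top

end ChaosAux

open ChaosAux in
/-- The Rademacher chaos of order 2 is equivalent, in the exponential Orlicz
space `L_M` with `M(t) = e^t − 1`, to the canonical basis of `ℓ²`. -/
theorem chaos_expOrlicz_equiv_l2 :
    ∃ C : ℝ, 1 ≤ C ∧ ∀ n : ℕ, 2 ≤ n → ∀ a : ℕ → ℕ → ℝ,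
      C⁻¹ * Real.sqrt (∑ i ∈ Finset.Icc 1 n, ∑ j ∈ Finset.Ioc i n, a i j ^ 2) ≤
          expOrliczNorm (fun t => ∑ i ∈ Finset.Icc 1 n, ∑ j ∈ Finset.Ioc i n,
            a i j * (rademacher i t * rademacher j t)) ∧
        expOrliczNorm (fun t => ∑ i ∈ Finset.Icc 1 n, ∑ j ∈ Finset.Ioc i n,
            a i j * (rademacher i t * rademacher j t)) ≤
          C * Real.sqrt (∑ i ∈ Finset.Icc 1 n, ∑ j ∈ Finset.Ioc i n, a i j ^ 2) := by
  refine ⟨16, by norm_num, ?_⟩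
  intro n hn a
  set N := n - 1 with hN
  set c := coef n a with hcdef
  set Q := ∑ i ∈ Finset.Icc 1 n, ∑ j ∈ Finset.Ioc i n, a i j ^ 2 with hQ
  have hQ0 : 0 ≤ Q := Finset.sum_nonneg fun i _ => Finset.sum_nonneg fun j _ => sq_nonneg _
  have hcs : ∑ S ∈ (Finset.range N).powerset, c S ^ 2 = Q := coef_sq hn a
  set X : ℝ → ℝ := fun t => ∑ i ∈ Finset.Icc 1 n, ∑ j ∈ Finset.Ioc i n,
      a i j * (rademacher i t * rademacher j t) with hX
  have htrans : ∀ l : ℝ, (∫ t in Set.Icc (0:ℝ) 1, (Real.exp (|X t| / l) - 1))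
      = (∑ T ∈ (Finset.range N).powerset, (Real.exp (|walsh c N T| / l) - 1)) / 2^N :=
    fun l => transfer hn a (fun u => Real.exp (|u| / l) - 1)
  rw [expOrliczNorm]
  rcases eq_or_lt_of_le hQ0 with hQz | hQpos
  · -- degenerate case Q = 0
    have haz : ∀ i ∈ Finset.Icc 1 n, ∀ j ∈ Finset.Ioc i n, a i j = 0 := by
      intro i hi j hj
      have h1 := (Finset.sum_eq_zero_iff_of_nonneg
        (fun i _ => Finset.sum_nonneg fun j _ => sq_nonneg (a i j))).mp hQz.symm i hi
      have h2 := (Finset.sum_eq_zero_iff_of_nonneg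
        (fun j _ => sq_nonneg (a i j))).mp h1 j hj
      exact pow_eq_zero_iff (by norm_num) |>.mp h2
    have hX0 : ∀ t, X t = 0 := by
      intro t
      rw [hX]
      apply Finset.sum_eq_zero; intro i hi
      apply Finset.sum_eq_zero; intro j hj
      rw [haz i hi j hj, zero_mul]
    have hzero : ∀ l : ℝ, (∫ t in Set.Icc (0:ℝ) 1, (Real.exp (|X t| / l) - 1)) = 0 := by
      intro l
      have h0 : ∀ t : ℝ, Real.exp (|X t| / l) - 1 = 0 := by
        intro t; rw [hX0 t]; simp
      simp only [h0, MeasureTheory.integral_zero]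
    have hset : {l : ℝ | 0 < l ∧ (∫ t in Set.Icc (0:ℝ) 1, (Real.exp (|X t| / l) - 1)) ≤ 1}
        = Set.Ioi 0 := by
      ext l
      simp only [Set.mem_setOf_eq, Set.mem_Ioi, and_iff_left_iff_imp]
      intro _
      rw [hzero l]
      norm_num
    rw [hset, csInf_Ioi, ← hQz, Real.sqrt_zero]
    norm_num
  · -- main case
    have hσ : 0 < Real.sqrt Q := Real.sqrt_pos.mpr hQpos
    set σ := Real.sqrt Q with hσdef
    have hpars : ∑ S ∈ (Finset.range N).powerset, c S ^ 2 = σ^2 := by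
      rw [hcs, hσdef, Real.sq_sqrt hQ0]
    have hsupp := coef_supp n a
    have hub : (∫ t in Set.Icc (0:ℝ) 1, (Real.exp (|X t| / (16*σ)) - 1)) ≤ 1 := by
      rw [htrans (16*σ)]
      have hb := exp_sum_bound N c σ hσ hsupp hpars
      rw [div_le_one (by positivity : (0:ℝ) < 2^N)]
      have h2N : (0:ℝ) < 2^N := by positivity
      nlinarith
    have hmem : (16*σ) ∈ {l : ℝ | 0 < l ∧
        (∫ t in Set.Icc (0:ℝ) 1, (Real.exp (|X t| / l) - 1)) ≤ 1} :=
      ⟨by positivity, hub⟩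
    have hbdd : BddBelow {l : ℝ | 0 < l ∧
        (∫ t in Set.Icc (0:ℝ) 1, (Real.exp (|X t| / l) - 1)) ≤ 1} :=
      ⟨0, fun l hl => hl.1.le⟩
    constructor
    · apply le_csInf ⟨16*σ, hmem⟩
      rintro b ⟨hb0, hbint⟩
      have h1 : ∑ T ∈ (Finset.range N).powerset, ((walsh c N T)^2 / (2*b^2))
          ≤ ∑ T ∈ (Finset.range N).powerset, (Real.exp (|walsh c N T|/b) - 1) := by
        apply Finset.sum_le_sum
        intro T _
        have hx0 : 0 ≤ |walsh c N T| / b := by positivity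
        have hq := Real.quadratic_le_exp_of_nonneg hx0
        have he : (|walsh c N T| / b)^2 = (walsh c N T)^2 / b^2 := by
          rw [div_pow, sq_abs]
        rw [he] at hq
        have hb2 : (walsh c N T)^2 / (2*b^2) = ((walsh c N T)^2 / b^2)/2 := by ring
        rw [hb2]
        linarith
      have h2 : ∑ T ∈ (Finset.range N).powerset, ((walsh c N T)^2/(2*b^2))
          = (2^N * σ^2)/(2*b^2) := by
        rw [← Finset.sum_div, parseval N c, hpars]
      have h3 : (∑ T ∈ (Finset.range N).powerset, (Real.exp (|walsh c N T|/b) - 1)) / 2^N ≤ 1 := by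
        rw [← htrans b]; exact hbint
      have h2N : (0:ℝ) < 2^N := by positivity
      have h4 : ∑ T ∈ (Finset.range N).powerset, (Real.exp (|walsh c N T|/b) - 1) ≤ 2^N := by
        rw [div_le_one h2N] at h3; exact h3
      have h5 : (2^N * σ^2)/(2*b^2) ≤ 2^N := by rw [← h2]; exact h1.trans h4
      have h6 : σ^2 ≤ 2*b^2 := by
        rw [div_le_iff₀ (by positivity)] at h5
        nlinarith
      have h7 : σ ≤ 16 * b := by
        nlinarith [sq_nonneg (σ - 16*b), mul_pos hb0 hb0]
      linarith
    · exact csInf_le hbdd hmem
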